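/- In the polynomial ring ℤ[x,y,z], the ideal quotient (x^n, y^n, z^n) : (x+y+z)^{n-1} equals the annihilator, under the contraction action of ℤ[x,y,z] on its graded dual, of the element Φ = Σ binom(n-1; a,b,c) (x^{n-1-a} y^{n-1-b} z^{n-1-c})^*, where the sum runs over all triples (a,b,c) of non-negative integers with a+b+c = n-1. -/

import Mathlib

open MvPolynomial

/-- The annihilator, under the contraction action of `S = ℤ[x,y,z]` on its graded dual,
of a functional `Φ`: the ideal of all `f` with `f(Φ) = 0`, i.e. `Φ(f·g) = 0` for all `g`. -/
def annIdeal {R σ : Type*} [CommRing R] (Φ : Module.Dual R (MvPolynomial σ R)) :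
    Ideal (MvPolynomial σ R) where
  carrier := {f | ∀ g, Φ (f * g) = 0}
  zero_mem' := by intro g; rw [zero_mul, map_zero]
  add_mem' := by
    intro a b ha hb g
    rw [add_mul, map_add, ha g, hb g, add_zero]
  smul_mem' := by
    intro c f hf g
    rw [smul_eq_mul, show c * f * g = f * (c * g) by ring]
    exact hf (c * g)

lemma mem_annIdeal_iff {R σ : Type*} [CommRing R] (Φ : Module.Dual R (MvPolynomial σ R))
    (f : MvPolynomial σ R) : f ∈ annIdeal Φ ↔ ∀ g, Φ (f * g) = 0 := Iff.rfl

private lemma coeff_X_pow_mul_eq_zero {n : ℕ} (i : Fin 3) (f : MvPolynomial (Fin 3) ℤ)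
    (d : Fin 3 →₀ ℕ) (hd : d i < n) :
    MvPolynomial.coeff d (X i ^ n * f) = 0 := by
  classical
  rw [coeff_mul]
  refine Finset.sum_eq_zero fun uv huv => ?_
  rcases eq_or_ne (Finsupp.single i n) uv.1 with h | h
  · exfalso
    have h1 : uv.1 + uv.2 = d := Finset.HasAntidiagonal.mem_antidiagonal.mp huv
    have h2 : uv.1 i + uv.2 i = d i := by rw [← h1]; simp
    have h3 : uv.1 i = n := by rw [← h]; simp
    omega
  · rw [coeff_X_pow, if_neg h, zero_mul]

private lemma mem_I_iff (n : ℕ) (hn : 1 ≤ n) (p : MvPolynomial (Fin 3) ℤ) :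
    p ∈ Ideal.span {(X 0 : MvPolynomial (Fin 3) ℤ) ^ n, X 1 ^ n, X 2 ^ n} ↔
      ∀ g, MvPolynomial.coeff (Finsupp.equivFunOnFinite.symm fun _ => n - 1) (p * g) = 0 := by
  classical
  set m : Fin 3 →₀ ℕ := Finsupp.equivFunOnFinite.symm fun _ => n - 1 with hm
  have hmi : ∀ i, m i = n - 1 := fun i => rfl
  constructor
  · intro hp
    refine Submodule.span_induction ?_ ?_ ?_ ?_ hp
    · rintro x hx g
      simp only [Set.mem_insert_iff, Set.mem_singleton_iff] at hx
      rcases hx with rfl | rfl | rfl <;>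
        exact coeff_X_pow_mul_eq_zero _ _ _ (by rw [hmi]; omega)
    · intro g; rw [zero_mul, coeff_zero]
    · intro a b _ _ ha hb g; rw [add_mul, coeff_add, ha g, hb g, add_zero]
    · intro c x _ hx g
      rw [smul_eq_mul, show c * x * g = x * (c * g) by ring]
      exact hx (c * g)
  · intro h
    have key : ∀ d ∈ p.support, ∃ i, n ≤ d i := by
      intro d hd
      by_contra hcon
      push_neg at hcon
      have hle : d ≤ m := fun i => by have := hcon i; rw [hmi]; omega
      have := h (monomial (m - d) 1)
      rw [coeff_mul_monomial', if_pos (tsub_le_self), tsub_tsub_cancel_of_le hle,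
        mul_one] at this
      exact (MvPolynomial.mem_support_iff.mp hd) this
    rw [p.as_sum]
    refine Ideal.sum_mem _ fun d hd => ?_
    obtain ⟨i, hi⟩ := key d hd
    have hsingle : Finsupp.single i n ≤ d := Finsupp.single_le_iff.mpr hi
    have : monomial d (MvPolynomial.coeff d p)
        = monomial (d - Finsupp.single i n) (MvPolynomial.coeff d p) * X i ^ n := by
      rw [X_pow_eq_monomial, monomial_mul, mul_one, tsub_add_cancel_of_le hsingle]
    rw [this]
    refine Ideal.mul_mem_left _ _ (Ideal.subset_span ?_)
    fin_cases i <;> simp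

private lemma Phi_apply (n : ℕ) (hn : 1 ≤ n) (h : MvPolynomial (Fin 3) ℤ) :
    (∑ c ∈ Finset.Nat.antidiagonalTuple 3 (n - 1),
        (Nat.multinomial Finset.univ c : ℤ) •
          lcoeff ℤ (Finsupp.equivFunOnFinite.symm fun i => n - 1 - c i)) h =
      MvPolynomial.coeff (Finsupp.equivFunOnFinite.symm fun _ => n - 1)
        (h * (X 0 + X 1 + X 2) ^ (n - 1)) := by
  classical
  set m : Fin 3 →₀ ℕ := Finsupp.equivFunOnFinite.symm fun _ => n - 1 with hm
  have hmi : ∀ i, m i = n - 1 := fun i => rfl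
  have hset : Finset.Nat.antidiagonalTuple 3 (n - 1)
      = Finset.piAntidiag Finset.univ (n - 1) := by
    ext c
    simp [Finset.Nat.mem_antidiagonalTuple, Finset.mem_piAntidiag]
  have hexp : (X 0 + X 1 + X 2 : MvPolynomial (Fin 3) ℤ) ^ (n - 1)
      = ∑ k ∈ Finset.piAntidiag Finset.univ (n - 1),
          (Nat.multinomial Finset.univ k : MvPolynomial (Fin 3) ℤ) *
            monomial (Finsupp.equivFunOnFinite.symm k) 1 := by
    rw [show (X 0 + X 1 + X 2 : MvPolynomial (Fin 3) ℤ) = ∑ i : Fin 3, X i by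
      rw [Fin.sum_univ_three], Finset.sum_pow_eq_sum_piAntidiag]
    refine Finset.sum_congr rfl fun k hk => ?_
    congr 1
    have : ∀ i : Fin 3, (Finsupp.equivFunOnFinite.symm k) i = k i := fun i => rfl
    rw [← MvPolynomial.prod_X_pow_eq_monomial]
    refine (Finset.prod_subset (Finset.subset_univ _) fun i _ hi => ?_).symm.trans
      (Finset.prod_congr rfl fun i _ => by rw [this])
    rw [show k i = 0 from Finsupp.notMem_support_iff.mp hi, pow_zero]
  rw [hexp, Finset.mul_sum, coeff_sum, hset]
  rw [LinearMap.sum_apply]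
  refine Finset.sum_congr rfl fun k hk => ?_
  have hsum : ∑ i, k i = n - 1 := by
    simpa using (Finset.mem_piAntidiag.mp hk).1
  have hki : ∀ i, k i ≤ n - 1 := by
    intro i
    rw [← hsum]
    exact Finset.single_le_sum (fun _ _ => Nat.zero_le _) (Finset.mem_univ i)
  have hle : Finsupp.equivFunOnFinite.symm k ≤ m := fun i => by
    have := hki i; rw [hmi]; exact this
  rw [LinearMap.smul_apply, lcoeff_apply, smul_eq_mul,
    show ((Nat.multinomial Finset.univ k : MvPolynomial (Fin 3) ℤ)) = C ((Nat.multinomial Finset.univ k : ℤ)) by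
      simp,
    show h * (C ((Nat.multinomial Finset.univ k : ℤ)) * monomial (Finsupp.equivFunOnFinite.symm k) 1)
      = C ((Nat.multinomial Finset.univ k : ℤ)) * (h * monomial (Finsupp.equivFunOnFinite.symm k) 1) by ring,
    coeff_C_mul, coeff_mul_monomial', if_pos hle, mul_one]
  have hidx : (Finsupp.equivFunOnFinite.symm fun i => n - 1 - k i)
      = m - Finsupp.equivFunOnFinite.symm k := by
    ext i
    rw [Finsupp.tsub_apply, hmi]
    rfl
  rw [hidx]

/-- The Macaulay inverse system of `(x^n, y^n, z^n) : (x+y+z)^{n-1}`:  this ideal quotient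
equals the annihilator of `Φ = Σ_{a+b+c=n-1} (n-1 choose a,b,c)·(x^{n-1-a}y^{n-1-b}z^{n-1-c})^*`. -/
theorem colon_eq_ann_inverse_system (n : ℕ) (hn : 1 ≤ n) :
    ((Ideal.span {(X 0 : MvPolynomial (Fin 3) ℤ) ^ n, X 1 ^ n, X 2 ^ n}).colon
        ((Ideal.span {(X 0 + X 1 + X 2) ^ (n - 1)} : Ideal (MvPolynomial (Fin 3) ℤ)) :
          Set (MvPolynomial (Fin 3) ℤ))) =
      annIdeal (∑ c ∈ Finset.Nat.antidiagonalTuple 3 (n - 1),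
        (Nat.multinomial Finset.univ c : ℤ) •
          lcoeff ℤ (Finsupp.equivFunOnFinite.symm fun i => n - 1 - c i)) := by
  ext f
  rw [Ideal.mem_colon_span_singleton, mem_I_iff n hn, mem_annIdeal_iff]
  constructor
  · intro H g
    rw [Phi_apply n hn, show f * g * (X 0 + X 1 + X 2) ^ (n - 1)
      = f * (X 0 + X 1 + X 2) ^ (n - 1) * g by ring]
    exact H g
  · intro H g
    rw [show f * (X 0 + X 1 + X 2) ^ (n - 1) * g
      = f * g * (X 0 + X 1 + X 2) ^ (n - 1) by ring, ← Phi_apply n hn]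
    exact H g
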